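/- In the kite graph P_k · K_{n−k+1} (with k ≥ 2, n − k + 1 ≥ 3), the minimum entry of the principal eigenvector is attained at the degree-1 endpoint of the path, and the maximum entry is attained at the vertex of the clique identified with the path endpoint (the vertex of maximum degree n − k + 1). -/

import Mathlib

open Finset Matrix

/-- The kite (lollipop) graph P_k · K_s on k + s − 1 vertices: vertices 0, …, k−1 form a
path, and vertices k−1, …, k+s−2 form a clique. -/
def kiteGraph (k s : ℕ) : SimpleGraph (Fin (k + s - 1)) where
  Adj a b := a ≠ b ∧
    ((a : ℕ) + 1 = b ∨ (b : ℕ) + 1 = a ∨ (k - 1 ≤ (a : ℕ) ∧ k - 1 ≤ (b : ℕ)))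
  symm := by
    constructor
    rintro a b ⟨hab, h⟩
    exact ⟨hab.symm, by tauto⟩
  loopless := by constructor; rintro a ⟨hab, -⟩; exact hab rfl

instance (k s : ℕ) : DecidableRel (kiteGraph k s).Adj := fun a b => by
  unfold kiteGraph; infer_instance

set_option maxHeartbeats 1600000 in
/-- In the kite graph P_k · K_{s} (k ≥ 2, s ≥ 3), the minimum entry of the positive
principal eigenvector is attained at the degree-1 endpoint of the path (vertex 0), and
the maximum entry at the clique vertex identified with the path endpoint (vertex k−1). -/
theorem kite_min_max_entries (k s : ℕ) (hk : 2 ≤ k) (hs : 3 ≤ s)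
    (lam : ℝ) (v : Fin (k + s - 1) → ℝ) (hv : ∀ x, 0 < v x)
    (heig : (kiteGraph k s).adjMatrix ℝ *ᵥ v = lam • v) :
    (∀ y, v ⟨0, by omega⟩ ≤ v y) ∧ (∀ y, v y ≤ v ⟨k - 1, by omega⟩) := by
  have hn : k + 2 ≤ k + s - 1 := by omega
  have heq : ∀ x, ∑ y ∈ (kiteGraph k s).neighborFinset x, v y = lam * v x := by
    intro x
    have h := congrFun heig x
    rwa [SimpleGraph.adjMatrix_mulVec_apply, Pi.smul_apply, smul_eq_mul] at h
  have adj_iff : ∀ a b : Fin (k+s-1), (kiteGraph k s).Adj a b ↔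
      ((a:ℕ) ≠ (b:ℕ) ∧ ((a:ℕ)+1 = b ∨ (b:ℕ)+1 = a ∨ (k-1 ≤ (a:ℕ) ∧ k-1 ≤ (b:ℕ)))) := by
    intro a b
    constructor
    · rintro ⟨h1, h2⟩; exact ⟨fun h => h1 (Fin.ext h), h2⟩
    · rintro ⟨h1, h2⟩; exact ⟨fun h => h1 (congrArg Fin.val h), h2⟩
  -- vertex 0 equation
  have eq0 : lam * v ⟨0, by omega⟩ = v ⟨1, by omega⟩ := by
    have h0 : (kiteGraph k s).neighborFinset ⟨0, by omega⟩ = {⟨1, by omega⟩} := by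
      ext y
      simp only [SimpleGraph.mem_neighborFinset, adj_iff, Finset.mem_singleton, Fin.ext_iff]
      omega
    have := heq ⟨0, by omega⟩
    rw [h0, Finset.sum_singleton] at this
    linarith
  -- interior path equation
  have eqmid : ∀ m (hm1 : 1 ≤ m) (hm2 : m + 1 ≤ k - 1),
      lam * v ⟨m, by omega⟩ = v ⟨m-1, by omega⟩ + v ⟨m+1, by omega⟩ := by
    intro m h1 h2
    have hset : (kiteGraph k s).neighborFinset ⟨m, by omega⟩ =
        {⟨m-1, by omega⟩, ⟨m+1, by omega⟩} := by
      ext y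
      simp only [SimpleGraph.mem_neighborFinset, adj_iff, Finset.mem_insert,
        Finset.mem_singleton, Fin.ext_iff]
      omega
    have hne : (⟨m-1, by omega⟩ : Fin (k+s-1)) ≠ ⟨m+1, by omega⟩ := by
      simp only [ne_eq, Fin.ext_iff]; omega
    have := heq ⟨m, by omega⟩
    rw [hset, Finset.sum_pair hne] at this
    linarith
  -- the clique sum
  set S : ℝ := ∑ y ∈ Finset.univ.filter (fun y : Fin (k+s-1) => k ≤ (y:ℕ)), v y with hS
  -- root equation
  have eqroot : lam * v ⟨k-1, by omega⟩ = v ⟨k-2, by omega⟩ + S := by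
    have hset : (kiteGraph k s).neighborFinset ⟨k-1, by omega⟩ =
        insert ⟨k-2, by omega⟩ (Finset.univ.filter (fun y : Fin (k+s-1) => k ≤ (y:ℕ))) := by
      ext y
      simp only [SimpleGraph.mem_neighborFinset, adj_iff, Finset.mem_insert,
        Finset.mem_filter, Finset.mem_univ, true_and, Fin.ext_iff]
      omega
    have hnotmem : (⟨k-2, by omega⟩ : Fin (k+s-1)) ∉
        Finset.univ.filter (fun y : Fin (k+s-1) => k ≤ (y:ℕ)) := by
      simp only [Finset.mem_filter, Finset.mem_univ, true_and]; omega
    have := heq ⟨k-1, by omega⟩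
    rw [hset, Finset.sum_insert hnotmem] at this
    linarith
  -- clique (non-root) equation
  have eqcl : ∀ i : Fin (k+s-1), k ≤ (i:ℕ) →
      lam * v i + v i = v ⟨k-1, by omega⟩ + S := by
    intro i hi
    have hset : (kiteGraph k s).neighborFinset i =
        insert ⟨k-1, by omega⟩
          ((Finset.univ.filter (fun y : Fin (k+s-1) => k ≤ (y:ℕ))).erase i) := by
      ext y
      simp only [SimpleGraph.mem_neighborFinset, adj_iff, Finset.mem_insert,
        Finset.mem_erase, Finset.mem_filter, Finset.mem_univ, true_and, Fin.ext_iff, ne_eq]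
      omega
    have hnotmem : (⟨k-1, by omega⟩ : Fin (k+s-1)) ∉
        (Finset.univ.filter (fun y : Fin (k+s-1) => k ≤ (y:ℕ))).erase i := by
      simp only [Finset.mem_erase, Finset.mem_filter, Finset.mem_univ, true_and, ne_eq]
      omega
    have hmem : i ∈ Finset.univ.filter (fun y : Fin (k+s-1) => k ≤ (y:ℕ)) := by
      simp only [Finset.mem_filter, Finset.mem_univ, true_and]; exact hi
    have h := heq i
    rw [hset, Finset.sum_insert hnotmem, Finset.sum_erase_eq_sub hmem] at h
    linarith
  -- lambda positive
  have hlam : 0 < lam := by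
    have h1 := hv ⟨0, by omega⟩
    have h2 := hv ⟨1, by omega⟩
    nlinarith [eq0]
  -- clique values constant
  set c : ℝ := v ⟨k, by omega⟩ with hc
  have hconst : ∀ i : Fin (k+s-1), k ≤ (i:ℕ) → v i = c := by
    intro i hi
    have h1 := eqcl i hi
    have h2 := eqcl ⟨k, by omega⟩ (by simp)
    have h3 : (lam + 1) * (v i - c) = 0 := by rw [hc]; ring_nf; linarith
    rcases mul_eq_zero.mp h3 with h | h
    · linarith
    · linarith
  have hcpos : 0 < c := hv _
  -- S ≥ 2c
  have hS2 : 2 * c ≤ S := by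
    have hsub : ({⟨k, by omega⟩, ⟨k+1, by omega⟩} : Finset (Fin (k+s-1))) ⊆
        Finset.univ.filter (fun y : Fin (k+s-1) => k ≤ (y:ℕ)) := by
      intro y hy
      simp only [Finset.mem_insert, Finset.mem_singleton] at hy
      simp only [Finset.mem_filter, Finset.mem_univ, true_and]
      rcases hy with h | h <;> subst h <;> simp
    have hne : (⟨k, by omega⟩ : Fin (k+s-1)) ≠ ⟨k+1, by omega⟩ := by
      simp only [ne_eq, Fin.ext_iff]; omega
    have hsum : ∑ y ∈ ({⟨k, by omega⟩, ⟨k+1, by omega⟩} : Finset (Fin (k+s-1))), v y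
        = 2 * c := by
      rw [Finset.sum_pair hne, hconst ⟨k, by omega⟩ (by simp), hconst ⟨k+1, by omega⟩ (by simp)]
      ring
    calc 2 * c = _ := hsum.symm
      _ ≤ S := Finset.sum_le_sum_of_subset_of_nonneg hsub (fun y _ _ => (hv y).le)
  have eqc : lam * c + c = v ⟨k-1, by omega⟩ + S := eqcl ⟨k, by omega⟩ (by simp)
  -- root value bigger than clique value
  have hrootc : c < v ⟨k-1, by omega⟩ := by
    have hx := hv ⟨k-2, by omega⟩
    have h1 : 0 < (lam + 1) * (v ⟨k-1, by omega⟩ - c) := by nlinarith [eqroot, eqc]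
    rcases mul_pos_iff.mp h1 with ⟨_, h⟩ | ⟨h, _⟩
    · linarith
    · linarith
  -- lambda > 2
  have hlam2 : 2 < lam := by
    have : lam * c > 2 * c := by linarith [eqc, hS2, hrootc]
    nlinarith
  -- path monotone
  have hmono : ∀ m (hm : m + 1 ≤ k - 1), v ⟨m, by omega⟩ ≤ v ⟨m+1, by omega⟩ := by
    intro m
    induction m with
    | zero =>
      intro _
      have h := hv ⟨0, by omega⟩
      nlinarith [eq0]
    | succ p ih =>
      intro hp
      have hprev : v ⟨p, by omega⟩ ≤ v ⟨p+1, by omega⟩ := ih (by omega)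
      have hmid := eqmid (p+1) (by omega) (by omega)
      simp only [Nat.add_sub_cancel] at hmid
      have h := hv ⟨p+1, by omega⟩
      nlinarith [hmid]
  -- chaining along the path
  have hpath : ∀ b (hb : b ≤ k - 1) a (ha : a ≤ b), v ⟨a, by omega⟩ ≤ v ⟨b, by omega⟩ := by
    intro b
    induction b with
    | zero => intro _ a ha; interval_cases a; exact le_refl _
    | succ p ih =>
      intro hb a ha
      rcases Nat.lt_or_ge a (p+1) with h | h
      · calc v ⟨a, by omega⟩ ≤ v ⟨p, by omega⟩ := ih (by omega) a (by omega)
          _ ≤ v ⟨p+1, by omega⟩ := hmono p (by omega)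
      · have : a = p + 1 := by omega
        subst this; exact le_refl _
  -- endpoint ≤ clique value
  have hx0c : v ⟨0, by omega⟩ ≤ c := by
    have h1 : v ⟨1, by omega⟩ ≤ v ⟨k-1, by omega⟩ := hpath (k-1) (le_refl _) 1 (by omega)
    have h2 : v ⟨k-1, by omega⟩ ≤ lam * c := by linarith [eqc, hS2, hcpos]
    have h3 : lam * v ⟨0, by omega⟩ ≤ lam * c := by linarith [eq0]
    exact le_of_mul_le_mul_left h3 hlam
  constructor
  · intro y
    rcases Nat.lt_or_ge (y:ℕ) k with h | h
    · have := hpath (y:ℕ) (by omega) 0 (Nat.zero_le _)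
      simpa using this
    · rw [hconst y h]; exact hx0c
  · intro y
    rcases Nat.lt_or_ge (y:ℕ) k with h | h
    · have := hpath (k-1) (le_refl _) (y:ℕ) (by omega)
      simpa using this
    · rw [hconst y h]; exact hrootc.le
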